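/- arXiv:1809.04488 — 2 statements merged into one kernel-verified Lean document; each statement's English description precedes it below -/
import Mathlib

section
/- For every real number λ > e·√2 there exists a natural number m such that for all n ≥ m, for every exchangeable probability distribution p on RB(n), and for T₁, T₂ independent random trees each distributed according to p, the expected value E[MAST(T₁,T₂)] ≤ λ·√n. -/
/-- Rooted binary leaf-labeled trees with labels of type `α`. -/
inductive RTree (α : Type) : Type where
  | leaf : α → RTree α
  | node : RTree α → RTree α → RTree α
  deriving DecidableEq

namespace RTree

variable {α β : Type}

/-- The multiset of leaf labels of a tree. -/
def leafM : RTree α → Multiset α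
  | leaf a => {a}
  | node l r => leafM l + leafM r

/-- `T` is a rooted binary leaf-labeled tree on label set `Fin n`:
every label of `Fin n` occurs exactly once among the leaves. -/
def IsRB {n : ℕ} (T : RTree (Fin n)) : Prop :=
  leafM T = (Finset.univ : Finset (Fin n)).val

/-- Relabel the leaves of a tree along a function. -/
def relabel (f : α → β) : RTree α → RTree β
  | leaf a => leaf (f a)
  | node l r => node (relabel f l) (relabel f r)

/-- Restriction of a tree to the set `A` of labels (`none` means the empty tree). -/
def restrict [DecidableEq α] (A : Finset α) : RTree α → Option (RTree α)
  | leaf a => if a ∈ A then some (leaf a) else none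
  | node l r =>
    match restrict A l, restrict A r with
    | some l', some r' => some (node l' r')
    | some l', none => some l'
    | none, some r' => some r'
    | none, none => none

/-- The size of a maximum agreement subtree of `T₁` and `T₂`: the largest cardinality
of a set `A` of labels with `T₁|_A = T₂|_A` (the empty set always agrees). -/
def mast {n : ℕ} (T₁ T₂ : RTree (Fin n)) : ℕ :=
  ((Finset.univ : Finset (Fin n)).powerset.filter
    (fun A => restrict A T₁ = restrict A T₂)).sup Finset.card

end RTree

namespace RTree

variable {α β : Type}

theorem leafM_relabel (f : α → β) (T : RTree α) : leafM (relabel f T) = (leafM T).map f := by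
  induction T with
  | leaf a => simp [leafM, relabel]
  | node l r ihl ihr => simp [leafM, relabel, ihl, ihr]

theorem relabel_inj (f : α → β) (hf : Function.Injective f) :
    ∀ x y : RTree α, relabel f x = relabel f y → x = y := by
  intro x
  induction x with
  | leaf a =>
    intro y h
    cases y with
    | leaf b => simp only [relabel, leaf.injEq] at h; rw [hf h]
    | node l r => simp [relabel] at h
  | node l r ihl ihr =>
    intro y h
    cases y with
    | leaf b => simp [relabel] at h
    | node l' r' =>
      simp only [relabel, node.injEq] at h
      rw [ihl _ h.1, ihr _ h.2]

theorem relabel_eq_relabel (f g : α → α) :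
    ∀ T : RTree α, relabel f T = relabel g T → ∀ a ∈ leafM T, f a = g a := by
  intro T
  induction T with
  | leaf a =>
    intro h b hb
    simp only [leafM, Multiset.mem_singleton] at hb
    subst hb
    simpa [relabel] using h
  | node l r ihl ihr =>
    intro h b hb
    simp only [relabel, node.injEq] at h
    simp only [leafM, Multiset.mem_add] at hb
    rcases hb with hb | hb
    · exact ihl h.1 b hb
    · exact ihr h.2 b hb

theorem restrict_relabel [DecidableEq α] (A : Finset α) (f : α → α)
    (h : ∀ a, f a ∈ A ↔ a ∈ A) :
    ∀ T : RTree α, restrict A (relabel f T) = Option.map (relabel f) (restrict A T) := by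
  intro T
  induction T with
  | leaf a => by_cases ha : a ∈ A <;> simp [restrict, relabel, ha, h a]
  | node l r ihl ihr =>
    simp only [relabel, restrict, ihl, ihr]
    cases restrict A l <;> cases restrict A r <;> rfl

theorem restrict_cases [DecidableEq α] (A : Finset α) :
    ∀ T : RTree α, (restrict A T = none ∧ (leafM T).filter (· ∈ A) = 0) ∨
      (∃ u, restrict A T = some u ∧ leafM u = (leafM T).filter (· ∈ A)) := by
  intro T
  induction T with
  | leaf a =>
    by_cases ha : a ∈ A
    · right; exact ⟨leaf a, by simp [restrict, ha], by simp [leafM, Multiset.filter_singleton, ha]⟩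
    · left; constructor <;> simp [restrict, leafM, Multiset.filter_singleton, ha]
  | node l r ihl ihr =>
    rcases ihl with ⟨hl, hl0⟩ | ⟨ul, hl, hul⟩ <;> rcases ihr with ⟨hr, hr0⟩ | ⟨ur, hr, hur⟩
    · left
      refine ⟨by simp [restrict, hl, hr], ?_⟩
      simp [leafM, Multiset.filter_add, hl0, hr0]
    · right
      exact ⟨ur, by simp [restrict, hl, hr], by
        simp [leafM, Multiset.filter_add, hl0, hur]⟩
    · right
      exact ⟨ul, by simp [restrict, hl, hr], by
        simp [leafM, Multiset.filter_add, hr0, hul]⟩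
    · right
      exact ⟨node ul ur, by simp [restrict, hl, hr], by
        simp [leafM, Multiset.filter_add, hul, hur]⟩

theorem restrict_isRB {n : ℕ} {T : RTree (Fin n)} (hT : IsRB T) {A : Finset (Fin n)}
    (hA : A.Nonempty) : ∃ u, restrict A T = some u ∧ leafM u = A.val := by
  have hfil : (Finset.univ : Finset (Fin n)).val.filter (· ∈ A) = A.val := by
    have : (Finset.univ : Finset (Fin n)).filter (· ∈ A) = A := by
      ext x; simp
    calc (Finset.univ : Finset (Fin n)).val.filter (· ∈ A)
        = ((Finset.univ : Finset (Fin n)).filter (· ∈ A)).val := rfl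
      _ = A.val := by rw [this]
  rcases restrict_cases A T with ⟨_, h0⟩ | ⟨u, hu, hleaf⟩
  · rw [IsRB] at hT
    rw [hT, hfil] at h0
    obtain ⟨a, ha⟩ := hA
    have : a ∈ A.val := ha
    rw [h0] at this
    simp at this
  · exact ⟨u, hu, by rw [hleaf, hT, hfil]⟩

theorem isRB_relabel {n : ℕ} (σ : Equiv.Perm (Fin n)) {T : RTree (Fin n)} (hT : IsRB T) :
    IsRB (relabel (⇑σ) T) := by
  rw [IsRB, leafM_relabel, hT]
  have : Multiset.map (⇑σ) (Finset.univ : Finset (Fin n)).val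
      = (Finset.map σ.toEmbedding Finset.univ).val := rfl
  rw [this, Finset.map_univ_equiv]

theorem sigma_mem_iff {n : ℕ} {σ : Equiv.Perm (Fin n)} {A : Finset (Fin n)}
    (hσ : ∀ x ∉ A, σ x = x) : ∀ a, σ a ∈ A ↔ a ∈ A := by
  intro a
  constructor
  · intro h
    by_contra ha
    rw [hσ a ha] at h
    exact ha h
  · intro h
    by_contra hsa
    have := hσ (σ a) hsa
    have := σ.injective this
    rw [this] at hsa
    exact hsa h

theorem card_perm_filter {n : ℕ} (A : Finset (Fin n)) :
    (Finset.univ.filter (fun σ : Equiv.Perm (Fin n) => ∀ x ∉ A, σ x = x)).card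
      = A.card.factorial := by
  have h1 : (Finset.univ.filter (fun σ : Equiv.Perm (Fin n) => ∀ x ∉ A, σ x = x)).card
      = Fintype.card {σ : Equiv.Perm (Fin n) // ∀ x, ¬(x ∈ A) → σ x = x} :=
    (Fintype.card_subtype _).symm
  rw [h1, ← Fintype.card_congr (Equiv.Perm.subtypeEquivSubtypePerm (fun x => x ∈ A)),
    Fintype.card_perm, Fintype.card_coe]

theorem relabel_cancel {n : ℕ} (σ : Equiv.Perm (Fin n)) (T : RTree (Fin n)) :
    relabel (⇑σ⁻¹) (relabel (⇑σ) T) = T := by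
  induction T with
  | leaf a => simp [relabel]
  | node l r ihl ihr => simp only [relabel, ihl, ihr]

theorem relabel_cancel' {n : ℕ} (σ : Equiv.Perm (Fin n)) (T : RTree (Fin n)) :
    relabel (⇑σ) (relabel (⇑σ⁻¹) T) = T := by
  induction T with
  | leaf a => simp [relabel]
  | node l r ihl ihr => simp only [relabel, ihl, ihr]

end RTree

open RTree in
theorem key_bound {n : ℕ} (RBn : Finset (RTree (Fin n))) (hRB : ∀ T, T ∈ RBn ↔ IsRB T)
    (p : RTree (Fin n) → ℝ) (hp0 : ∀ T, 0 ≤ p T) (hp1 : ∑ T ∈ RBn, p T = 1)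
    (hex : ∀ (σ : Equiv.Perm (Fin n)) (T : RTree (Fin n)), IsRB T →
      p (relabel (⇑σ) T) = p T)
    (A : Finset (Fin n)) (hA : A.Nonempty) (T₀ : RTree (Fin n)) (hT₀ : T₀ ∈ RBn) :
    (A.card.factorial : ℝ) *
      (∑ T ∈ RBn.filter (fun T => restrict A T = restrict A T₀), p T) ≤ 1 := by
  classical
  obtain ⟨u, hu, huleaf⟩ := restrict_isRB ((hRB T₀).1 hT₀) hA
  set q : Option (RTree (Fin n)) → ℝ :=
    fun t => ∑ T ∈ RBn.filter (fun T => restrict A T = t), p T with hq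
  set S : Finset (Equiv.Perm (Fin n)) :=
    Finset.univ.filter (fun σ : Equiv.Perm (Fin n) => ∀ x ∉ A, σ x = x) with hS
  -- step A : q is constant on the orbit
  have stepA : ∀ σ ∈ S, q (some (relabel (⇑σ) u)) = q (some u) := by
    intro σ hσ
    have hiff : ∀ a, σ a ∈ A ↔ a ∈ A := sigma_mem_iff (by simpa [hS] using hσ)
    have hiff' : ∀ a, σ⁻¹ a ∈ A ↔ a ∈ A := by
      intro a
      constructor
      · intro h; have := (hiff _).2 h; simpa using this
      · intro h; by_contra hc
        have := (hiff _).1 ((by simpa using h : σ (σ⁻¹ a) ∈ A))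
        exact hc this
    symm
    apply Finset.sum_nbij' (fun T => relabel (⇑σ) T) (fun T => relabel (⇑σ⁻¹) T)
    · intro T hT
      simp only [Finset.mem_filter] at hT ⊢
      refine ⟨(hRB _).2 (isRB_relabel σ ((hRB T).1 hT.1)), ?_⟩
      rw [restrict_relabel A (⇑σ) hiff, hT.2]; rfl
    · intro T hT
      simp only [Finset.mem_filter] at hT ⊢
      refine ⟨(hRB _).2 (isRB_relabel σ⁻¹ ((hRB T).1 hT.1)), ?_⟩
      rw [restrict_relabel A (⇑σ⁻¹) hiff', hT.2, Option.map_some]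
      rw [relabel_cancel]
    · intro T _; exact relabel_cancel σ T
    · intro T _; exact relabel_cancel' σ T
    · intro T hT
      simp only [Finset.mem_filter] at hT
      exact (hex σ T ((hRB T).1 hT.1)).symm
  -- step B : injectivity of the orbit map on S
  have stepB : Set.InjOn (fun σ : Equiv.Perm (Fin n) => some (relabel (⇑σ) u) :
      Equiv.Perm (Fin n) → Option (RTree (Fin n))) ↑S := by
    intro σ hσ τ hτ h
    simp only [Option.some.injEq] at h
    have hag : ∀ a ∈ leafM u, σ a = τ a := relabel_eq_relabel _ _ u h
    have hσ' : ∀ x ∉ A, σ x = x := by simpa [hS] using hσ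
    have hτ' : ∀ x ∉ A, τ x = x := by simpa [hS] using hτ
    apply Equiv.ext
    intro a
    by_cases ha : a ∈ A
    · exact hag a (by rw [huleaf]; exact ha)
    · rw [hσ' a ha, hτ' a ha]
  -- step C : the orbit sums to at most 1
  have stepC : ∑ σ ∈ S, q (some (relabel (⇑σ) u)) ≤ 1 := by
    rw [← Finset.sum_image stepB]
    set I : Finset (Option (RTree (Fin n))) :=
      S.image (fun σ : Equiv.Perm (Fin n) => some (relabel (⇑σ) u)) with hI
    set s : Finset (RTree (Fin n)) := RBn.filter (fun T => restrict A T ∈ I) with hs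
    have hmaps : ∀ T ∈ s, restrict A T ∈ I := by
      intro T hT; exact (Finset.mem_filter.1 hT).2
    have := Finset.sum_fiberwise_of_maps_to hmaps p
    have hinner : ∀ t ∈ I, (s.filter (fun T => restrict A T = t)) =
        RBn.filter (fun T => restrict A T = t) := by
      intro t ht
      ext T
      simp only [hs, Finset.mem_filter]
      constructor
      · rintro ⟨⟨h1, _⟩, h3⟩; exact ⟨h1, h3⟩
      · rintro ⟨h1, h2⟩; exact ⟨⟨h1, h2 ▸ ht⟩, h2⟩
    calc ∑ t ∈ I, q t = ∑ t ∈ I, ∑ T ∈ s.filter (fun T => restrict A T = t), p T := by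
          apply Finset.sum_congr rfl
          intro t ht; rw [hq]; rw [hinner t ht]
      _ = ∑ T ∈ s, p T := this
      _ ≤ ∑ T ∈ RBn, p T := Finset.sum_le_sum_of_subset_of_nonneg
          (Finset.filter_subset _ _) (fun T hT _ => hp0 T)
      _ = 1 := hp1
  -- combine
  have hconst : ∑ σ ∈ S, q (some (relabel (⇑σ) u)) = (S.card : ℝ) * q (some u) := by
    rw [Finset.sum_congr rfl stepA, Finset.sum_const, nsmul_eq_mul]
  rw [hu]
  have : (A.card.factorial : ℝ) * q (some u) ≤ 1 := by
    rw [← card_perm_filter A, ← hS, ← hconst]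
    exact stepC
  exact this

open RTree in
theorem pair_bound {n : ℕ} (RBn : Finset (RTree (Fin n))) (hRB : ∀ T, T ∈ RBn ↔ IsRB T)
    (p : RTree (Fin n) → ℝ) (hp0 : ∀ T, 0 ≤ p T) (hp1 : ∑ T ∈ RBn, p T = 1)
    (hex : ∀ (σ : Equiv.Perm (Fin n)) (T : RTree (Fin n)), IsRB T →
      p (relabel (⇑σ) T) = p T)
    (A : Finset (Fin n)) (hA : A.Nonempty) :
    (A.card.factorial : ℝ) * (∑ T₁ ∈ RBn, ∑ T₂ ∈ RBn, p T₁ * p T₂ *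
      (if restrict A T₁ = restrict A T₂ then (1:ℝ) else 0)) ≤ 1 := by
  classical
  have inner : ∀ T₁ ∈ RBn, ∑ T₂ ∈ RBn, p T₁ * p T₂ *
      (if restrict A T₁ = restrict A T₂ then (1:ℝ) else 0)
      = p T₁ * ∑ T₂ ∈ RBn.filter (fun T => restrict A T = restrict A T₁), p T₂ := by
    intro T₁ _
    rw [Finset.mul_sum, Finset.sum_filter]
    apply Finset.sum_congr rfl
    intro T₂ _
    by_cases h : restrict A T₁ = restrict A T₂
    · rw [if_pos h, if_pos h.symm]; ring
    · rw [if_neg h, if_neg (fun hc => h hc.symm)]; ring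
  rw [Finset.sum_congr rfl inner, Finset.mul_sum]
  calc ∑ T₁ ∈ RBn, (A.card.factorial : ℝ) *
        (p T₁ * ∑ T₂ ∈ RBn.filter (fun T => restrict A T = restrict A T₁), p T₂)
      ≤ ∑ T₁ ∈ RBn, p T₁ * 1 := by
        apply Finset.sum_le_sum
        intro T₁ hT₁
        have hk := key_bound RBn hRB p hp0 hp1 hex A hA T₁ hT₁
        calc (A.card.factorial : ℝ) *
              (p T₁ * ∑ T₂ ∈ RBn.filter (fun T => restrict A T = restrict A T₁), p T₂)
            = p T₁ * ((A.card.factorial : ℝ) *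
              ∑ T₂ ∈ RBn.filter (fun T => restrict A T = restrict A T₁), p T₂) := by ring
          _ ≤ p T₁ * 1 := by
              apply mul_le_mul_of_nonneg_left hk (hp0 T₁)
    _ = 1 := by simp [hp1]

open RTree in
theorem mast_pointwise {n : ℕ} (K : ℕ) (T₁ T₂ : RTree (Fin n)) :
    (mast T₁ T₂ : ℝ) ≤ (K - 1 : ℕ) + ∑ A ∈ (Finset.univ : Finset (Fin n)).powerset.filter
      (fun A => K ≤ A.card), (n : ℝ) *
      (if restrict A T₁ = restrict A T₂ then (1:ℝ) else 0) := by
  classical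
  set 𝒜 := (Finset.univ : Finset (Fin n)).powerset.filter (fun A => K ≤ A.card) with h𝒜
  have hterm : ∀ A ∈ 𝒜, (0:ℝ) ≤ (n : ℝ) * (if restrict A T₁ = restrict A T₂ then (1:ℝ) else 0) := by
    intro A _
    positivity
  have hmast_le_n : (mast T₁ T₂ : ℕ) ≤ n := by
    apply Finset.sup_le
    intro A hA
    have := Finset.mem_powerset.1 (Finset.mem_filter.1 hA).1
    calc A.card ≤ (Finset.univ : Finset (Fin n)).card := Finset.card_le_card this
      _ = n := by simp
  by_cases hex : ∃ A ∈ 𝒜, restrict A T₁ = restrict A T₂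
  · obtain ⟨A₀, hA₀, hagree⟩ := hex
    have h1 : (n : ℝ) ≤ ∑ A ∈ 𝒜, (n : ℝ) *
        (if restrict A T₁ = restrict A T₂ then (1:ℝ) else 0) := by
      have := Finset.single_le_sum hterm hA₀
      rw [if_pos hagree, mul_one] at this
      exact this
    have h2 : (mast T₁ T₂ : ℝ) ≤ (n : ℝ) := by exact_mod_cast hmast_le_n
    have h3 : (0:ℝ) ≤ ((K - 1 : ℕ) : ℝ) := by positivity
    linarith
  · push_neg at hex
    have hsum0 : ∑ A ∈ 𝒜, (n : ℝ) *
        (if restrict A T₁ = restrict A T₂ then (1:ℝ) else 0) = 0 := by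
      apply Finset.sum_eq_zero
      intro A hA
      rw [if_neg (hex A hA), mul_zero]
    rw [hsum0, add_zero]
    have : mast T₁ T₂ ≤ K - 1 := by
      apply Finset.sup_le
      intro A hA
      simp only [Finset.mem_filter] at hA
      by_contra hc
      push_neg at hc
      have hK : K ≤ A.card := by omega
      exact hex A (Finset.mem_filter.2 ⟨hA.1, hK⟩) hA.2
    exact_mod_cast this

theorem factorial_lower (k : ℕ) : ((k:ℝ))^k ≤ Real.exp k * k.factorial := by
  have h1 : ((k:ℝ))^k / k.factorial ≤ Real.exp k := by
    have hsum := Real.sum_le_exp_of_nonneg (x := (k:ℝ)) (by positivity) (k+1)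
    refine le_trans ?_ hsum
    exact Finset.single_le_sum (f := fun i => ((k:ℝ))^i / (i.factorial:ℝ))
      (fun i _ => by positivity) (Finset.self_mem_range_succ k)
  have hfac : (0:ℝ) < k.factorial := by exact_mod_cast k.factorial_pos
  calc ((k:ℝ))^k = ((k:ℝ))^k / k.factorial * k.factorial := by field_simp
    _ ≤ Real.exp k * k.factorial := by
        apply mul_le_mul_of_nonneg_right h1 hfac.le

theorem choose_le_rho_pow_mul_factorial {c : ℝ} (hc : Real.exp 1 ≤ c) (n k : ℕ)
    (hk : c * Real.sqrt n ≤ k) :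
    (n.choose k : ℝ) ≤ (Real.exp 2 / c^2)^k * k.factorial := by
  have hc0 : (0:ℝ) < c := lt_of_lt_of_le (Real.exp_pos 1) hc
  have hfac : (0:ℝ) < k.factorial := by exact_mod_cast k.factorial_pos
  have hc2n : c^2 * n ≤ (k:ℝ)^2 := by
    have h1 : (0:ℝ) ≤ c * Real.sqrt n := by positivity
    have := mul_self_le_mul_self h1 hk
    calc c^2 * n = (c * Real.sqrt n) * (c * Real.sqrt n) := by
          have hs : Real.sqrt n * Real.sqrt n = (n:ℝ) :=
            Real.mul_self_sqrt (by positivity : (0:ℝ) ≤ (n:ℝ))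
          nlinarith [hs]
      _ ≤ (k:ℝ) * k := this
      _ = (k:ℝ)^2 := (sq (k:ℝ)).symm
  have e1 : (c^2 * n)^k ≤ (((k:ℝ))^2)^k :=
    pow_le_pow_left₀ (by positivity) hc2n k
  have e3 : (((k:ℝ))^k)^2 ≤ (Real.exp k * k.factorial)^2 :=
    pow_le_pow_left₀ (by positivity) (factorial_lower k) 2
  have e4 : (Real.exp (k:ℝ) * (k.factorial:ℝ))^2 = (Real.exp 2)^k * ((k.factorial:ℝ))^2 := by
    rw [mul_pow]
    congr 1
    rw [← Real.exp_one_pow, ← pow_mul, mul_comm k 2, pow_mul, Real.exp_one_pow]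
    norm_num
  have hnk : ((n:ℝ))^k ≤ (Real.exp 2 / c^2)^k * ((k.factorial:ℝ))^2 := by
    have echain : (c^2)^k * ((n:ℝ))^k ≤ (Real.exp 2)^k * ((k.factorial:ℝ))^2 := by
      calc (c^2)^k * ((n:ℝ))^k = (c^2 * n)^k := (mul_pow _ _ _).symm
        _ ≤ (((k:ℝ))^2)^k := e1
        _ = (((k:ℝ))^k)^2 := by rw [← pow_mul, ← pow_mul, mul_comm]
        _ ≤ (Real.exp k * k.factorial)^2 := e3
        _ = (Real.exp 2)^k * ((k.factorial:ℝ))^2 := e4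
    have hpos : (0:ℝ) < (c^2)^k := by positivity
    rw [div_pow, div_mul_eq_mul_div, le_div_iff₀ hpos]
    calc ((n:ℝ))^k * (c^2)^k = (c^2)^k * ((n:ℝ))^k := by ring
      _ ≤ (Real.exp 2)^k * ((k.factorial:ℝ))^2 := echain
  calc (n.choose k : ℝ) ≤ ((n:ℝ))^k / k.factorial := Nat.choose_le_pow_div k n
    _ ≤ ((Real.exp 2 / c^2)^k * ((k.factorial:ℝ))^2) / k.factorial := by
        apply div_le_div_of_nonneg_right hnk hfac.le
    _ = (Real.exp 2 / c^2)^k * k.factorial := by field_simp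

set_option maxHeartbeats 1000000 in
open RTree in
/-- For every `λ > e·√2` there is an `m` such that for all `n ≥ m` and every exchangeable
probability distribution `p` on `RB(n)`, the expected size of the maximum agreement subtree
of two independent `p`-random trees is at most `λ·√n`. -/
theorem expected_mast_exchangeable_upper_bound (lam : ℝ)
    (hlam : Real.exp 1 * Real.sqrt 2 < lam) :
    ∃ m : ℕ, ∀ n : ℕ, m ≤ n →
      ∀ (RBn : Finset (RTree (Fin n))), (∀ T, T ∈ RBn ↔ RTree.IsRB T) →
      ∀ p : RTree (Fin n) → ℝ, (∀ T, 0 ≤ p T) → (∑ T ∈ RBn, p T = 1) →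
      (∀ (σ : Equiv.Perm (Fin n)) (T : RTree (Fin n)), RTree.IsRB T →
        p (RTree.relabel (⇑σ) T) = p T) →
      ∑ T₁ ∈ RBn, ∑ T₂ ∈ RBn, p T₁ * p T₂ * (RTree.mast T₁ T₂ : ℝ) ≤ lam * Real.sqrt n := by
  classical
  set c : ℝ := Real.exp 1 + 1/2 with hc
  have he_gt : (2.7182818283 : ℝ) < Real.exp 1 := Real.exp_one_gt_d9
  have he_lt : Real.exp 1 < 2.7182818286 := Real.exp_one_lt_d9
  have hsqrt2 : (1.4:ℝ) < Real.sqrt 2 := by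
    rw [show (1.4:ℝ) = Real.sqrt (1.4^2) by
      rw [Real.sqrt_sq (by norm_num)]]
    apply Real.sqrt_lt_sqrt (by norm_num)
    norm_num
  have hce : Real.exp 1 ≤ c := by rw [hc]; linarith
  have hc0 : (0:ℝ) < c := by linarith
  have hclam : c < lam := by
    have h1 : Real.exp 1 * Real.sqrt 2 > 2.7182818283 * 1.4 := by
      have := Real.sqrt_nonneg (2:ℝ)
      nlinarith
    rw [hc]; nlinarith
  set δ : ℝ := lam - c with hδdef
  have hδ : 0 < δ := by rw [hδdef]; linarith
  set ρ : ℝ := Real.exp 2 / c^2 with hρ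
  have hρ0 : 0 ≤ ρ := by positivity
  have hρ1 : ρ < 1 := by
    rw [hρ, div_lt_one (by positivity)]
    have h2 : Real.exp 2 = Real.exp 1 ^ 2 := by
      rw [Real.exp_one_pow]; norm_num
    rw [h2]
    have hcstrict : Real.exp 1 < c := by rw [hc]; linarith
    exact pow_lt_pow_left₀ hcstrict (Real.exp_pos 1).le (by norm_num)
  have hρpos : 0 < ρ := by
    rw [hρ]; positivity
  -- tendsto part
  have h0 : Filter.Tendsto (fun s : ℕ => ((s:ℝ))^4 * (ρ^3)^s) Filter.atTop (nhds 0) :=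
    tendsto_pow_const_mul_const_pow_of_lt_one 4 (by positivity)
      (pow_lt_one₀ hρ0 hρ1 (by norm_num))
  have hshift : Filter.Tendsto (fun s : ℕ => (((s+1:ℕ)):ℝ)^4 * (ρ^3)^(s+1))
      Filter.atTop (nhds 0) := h0.comp (Filter.tendsto_add_atTop_nat 1)
  have hF : Filter.Tendsto (fun s : ℕ => 2 * ((s:ℝ)+1)^4 * (ρ^3)^s)
      Filter.atTop (nhds 0) := by
    have h2 := hshift.const_mul (2/ρ^3)
    rw [mul_zero] at h2
    apply h2.congr
    intro s
    have hρ3 : (ρ:ℝ)^3 ≠ 0 := by positivity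
    push_cast
    field_simp
    ring
  have hev : ∀ᶠ (s : ℕ) in Filter.atTop, 2 * ((s:ℝ)+1)^4 * (ρ^3)^s < 1 :=
    hF.eventually (gt_mem_nhds (by norm_num : (0:ℝ) < 1))
  obtain ⟨s₁, hs₁⟩ := Filter.eventually_atTop.1 hev
  refine ⟨max (s₁ * s₁) (⌈(2/δ)^2⌉₊ + 1), ?_⟩
  intro n hn RBn hRB p hp0 hp1 hexc
  have hn1 : 1 ≤ n := le_trans (by omega) (le_trans (le_max_right _ _) hn)
  have hsq : s₁ ≤ Nat.sqrt n := by
    have : s₁ * s₁ ≤ n := le_trans (le_max_left _ _) hn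
    calc s₁ = Nat.sqrt (s₁ ^ 2) := (Nat.sqrt_eq' s₁).symm
      _ ≤ Nat.sqrt n := Nat.sqrt_le_sqrt (by nlinarith)
  have hsqn : (2:ℝ)/δ ≤ Real.sqrt n := by
    rw [show (2:ℝ)/δ = Real.sqrt ((2/δ)^2) by
      rw [Real.sqrt_sq (by positivity)]]
    apply Real.sqrt_le_sqrt
    calc (2/δ)^2 ≤ (⌈(2/δ)^2⌉₊ : ℝ) := Nat.le_ceil _
      _ ≤ n := by
          have : ⌈(2/δ)^2⌉₊ ≤ n := le_trans (by omega) (le_trans (le_max_right _ _) hn)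
          exact_mod_cast this
  set k₀ : ℕ := ⌈c * Real.sqrt n⌉₊ with hk₀def
  set K : ℕ := k₀ + 1 with hKdef
  set 𝒜 := (Finset.univ : Finset (Fin n)).powerset.filter (fun A => K ≤ A.card) with h𝒜
  -- step 1 : pointwise bound and expansion
  have hKk₀ : (K - 1 : ℕ) = k₀ := by omega
  have step1 : ∑ T₁ ∈ RBn, ∑ T₂ ∈ RBn, p T₁ * p T₂ * (mast T₁ T₂ : ℝ)
      ≤ ∑ T₁ ∈ RBn, ∑ T₂ ∈ RBn, p T₁ * p T₂ *
        ((k₀ : ℝ) + ∑ A ∈ 𝒜, (n : ℝ) * (if restrict A T₁ = restrict A T₂ then (1:ℝ) else 0)) := by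
    apply Finset.sum_le_sum
    intro T₁ _
    apply Finset.sum_le_sum
    intro T₂ _
    apply mul_le_mul_of_nonneg_left _ (mul_nonneg (hp0 T₁) (hp0 T₂))
    have := mast_pointwise K T₁ T₂
    rw [hKk₀] at this
    exact this
  -- step 2 : expand the sum
  have step2 : ∑ T₁ ∈ RBn, ∑ T₂ ∈ RBn, p T₁ * p T₂ *
        ((k₀ : ℝ) + ∑ A ∈ 𝒜, (n : ℝ) * (if restrict A T₁ = restrict A T₂ then (1:ℝ) else 0))
      = (k₀ : ℝ) + ∑ A ∈ 𝒜, (n : ℝ) * (∑ T₁ ∈ RBn, ∑ T₂ ∈ RBn, p T₁ * p T₂ *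
          (if restrict A T₁ = restrict A T₂ then (1:ℝ) else 0)) := by
    have exp1 : ∀ T₁ T₂ : RTree (Fin n), p T₁ * p T₂ *
        ((k₀ : ℝ) + ∑ A ∈ 𝒜, (n : ℝ) * (if restrict A T₁ = restrict A T₂ then (1:ℝ) else 0))
        = p T₁ * p T₂ * (k₀ : ℝ) + ∑ A ∈ 𝒜, (n : ℝ) *
          (p T₁ * p T₂ * (if restrict A T₁ = restrict A T₂ then (1:ℝ) else 0)) := by
      intro T₁ T₂
      rw [mul_add, Finset.mul_sum]
      congr 1
      apply Finset.sum_congr rfl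
      intro A _
      ring
    calc ∑ T₁ ∈ RBn, ∑ T₂ ∈ RBn, p T₁ * p T₂ *
          ((k₀ : ℝ) + ∑ A ∈ 𝒜, (n : ℝ) * (if restrict A T₁ = restrict A T₂ then (1:ℝ) else 0))
        = ∑ T₁ ∈ RBn, (∑ T₂ ∈ RBn, p T₁ * p T₂ * (k₀ : ℝ)
          + ∑ T₂ ∈ RBn, ∑ A ∈ 𝒜, (n : ℝ) *
            (p T₁ * p T₂ * (if restrict A T₁ = restrict A T₂ then (1:ℝ) else 0))) := by
          apply Finset.sum_congr rfl
          intro T₁ _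
          rw [← Finset.sum_add_distrib]
          apply Finset.sum_congr rfl
          intro T₂ _
          exact exp1 T₁ T₂
      _ = (∑ T₁ ∈ RBn, ∑ T₂ ∈ RBn, p T₁ * p T₂ * (k₀ : ℝ))
          + ∑ T₁ ∈ RBn, ∑ T₂ ∈ RBn, ∑ A ∈ 𝒜, (n : ℝ) *
            (p T₁ * p T₂ * (if restrict A T₁ = restrict A T₂ then (1:ℝ) else 0)) :=
          Finset.sum_add_distrib
      _ = (k₀ : ℝ) + ∑ A ∈ 𝒜, (n : ℝ) * (∑ T₁ ∈ RBn, ∑ T₂ ∈ RBn, p T₁ * p T₂ *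
          (if restrict A T₁ = restrict A T₂ then (1:ℝ) else 0)) := by
          congr 1
          · calc ∑ T₁ ∈ RBn, ∑ T₂ ∈ RBn, p T₁ * p T₂ * (k₀ : ℝ)
                = ∑ T₁ ∈ RBn, p T₁ * (∑ T₂ ∈ RBn, p T₂) * (k₀ : ℝ) := by
                  apply Finset.sum_congr rfl
                  intro T₁ _
                  rw [← Finset.sum_mul, ← Finset.mul_sum]
              _ = (k₀ : ℝ) := by
                  rw [hp1]
                  simp only [mul_one]
                  rw [← Finset.sum_mul, hp1, one_mul]
          · calc ∑ T₁ ∈ RBn, ∑ T₂ ∈ RBn, ∑ A ∈ 𝒜, (n : ℝ) *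
                  (p T₁ * p T₂ * (if restrict A T₁ = restrict A T₂ then (1:ℝ) else 0))
                = ∑ T₁ ∈ RBn, ∑ A ∈ 𝒜, ∑ T₂ ∈ RBn, (n : ℝ) *
                  (p T₁ * p T₂ * (if restrict A T₁ = restrict A T₂ then (1:ℝ) else 0)) := by
                  apply Finset.sum_congr rfl
                  intro T₁ _
                  exact Finset.sum_comm
              _ = ∑ A ∈ 𝒜, ∑ T₁ ∈ RBn, ∑ T₂ ∈ RBn, (n : ℝ) *
                  (p T₁ * p T₂ * (if restrict A T₁ = restrict A T₂ then (1:ℝ) else 0)) :=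
                  Finset.sum_comm
              _ = ∑ A ∈ 𝒜, (n : ℝ) * (∑ T₁ ∈ RBn, ∑ T₂ ∈ RBn, p T₁ * p T₂ *
                  (if restrict A T₁ = restrict A T₂ then (1:ℝ) else 0)) := by
                  apply Finset.sum_congr rfl
                  intro A _
                  rw [Finset.mul_sum]
                  apply Finset.sum_congr rfl
                  intro T₁ _
                  rw [Finset.mul_sum]
  -- step 3 : bound each pair probability
  have h𝒜ne : ∀ A ∈ 𝒜, A.Nonempty := by
    intro A hA
    have hK : K ≤ A.card := (Finset.mem_filter.1 hA).2
    exact Finset.card_pos.1 (by omega)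
  have hPA : ∀ A ∈ 𝒜, ∑ T₁ ∈ RBn, ∑ T₂ ∈ RBn, p T₁ * p T₂ *
      (if restrict A T₁ = restrict A T₂ then (1:ℝ) else 0) ≤ 1 / (A.card.factorial : ℝ) := by
    intro A hA
    have hfac : (0:ℝ) < A.card.factorial := by exact_mod_cast A.card.factorial_pos
    rw [le_div_iff₀ hfac]
    calc (∑ T₁ ∈ RBn, ∑ T₂ ∈ RBn, p T₁ * p T₂ *
          (if restrict A T₁ = restrict A T₂ then (1:ℝ) else 0)) * A.card.factorial
        = (A.card.factorial : ℝ) * ∑ T₁ ∈ RBn, ∑ T₂ ∈ RBn, p T₁ * p T₂ *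
          (if restrict A T₁ = restrict A T₂ then (1:ℝ) else 0) := by ring
      _ ≤ 1 := pair_bound RBn hRB p hp0 hp1 hexc A (h𝒜ne A hA)
  have step3 : ∑ A ∈ 𝒜, (n : ℝ) * (∑ T₁ ∈ RBn, ∑ T₂ ∈ RBn, p T₁ * p T₂ *
      (if restrict A T₁ = restrict A T₂ then (1:ℝ) else 0))
      ≤ ∑ A ∈ 𝒜, (n : ℝ) / (A.card.factorial : ℝ) := by
    apply Finset.sum_le_sum
    intro A hA
    calc (n : ℝ) * (∑ T₁ ∈ RBn, ∑ T₂ ∈ RBn, p T₁ * p T₂ *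
          (if restrict A T₁ = restrict A T₂ then (1:ℝ) else 0))
        ≤ (n : ℝ) * (1 / (A.card.factorial : ℝ)) :=
          mul_le_mul_of_nonneg_left (hPA A hA) (by positivity)
      _ = (n : ℝ) / (A.card.factorial : ℝ) := by ring
  -- step 4 : grouping by cardinality
  have hKfloor : c * Real.sqrt n ≤ (K : ℝ) := by
    calc c * Real.sqrt n ≤ (k₀ : ℝ) := Nat.le_ceil _
      _ ≤ (K : ℝ) := by exact_mod_cast Nat.le_succ k₀
  have step4 : ∑ A ∈ 𝒜, (n : ℝ) / (A.card.factorial : ℝ)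
      ≤ ((n:ℝ) + 1) * ((n : ℝ) * ρ^K) := by
    set img := 𝒜.image Finset.card with himg
    have hgroup : ∑ A ∈ 𝒜, (n:ℝ)/(A.card.factorial:ℝ)
        = ∑ k ∈ img, ∑ A ∈ 𝒜.filter (fun A => A.card = k), (n:ℝ)/(A.card.factorial:ℝ) :=
      (Finset.sum_fiberwise_of_maps_to (fun A hA => Finset.mem_image_of_mem _ hA) _).symm
    rw [hgroup]
    have hper : ∀ k ∈ img, ∑ A ∈ 𝒜.filter (fun A => A.card = k),
        (n:ℝ)/(A.card.factorial:ℝ) ≤ (n : ℝ) * ρ^K := by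
      intro k hk
      obtain ⟨A₀, hA₀, hA₀k⟩ := Finset.mem_image.1 hk
      have hKk : K ≤ k := hA₀k ▸ (Finset.mem_filter.1 hA₀).2
      have hck : c * Real.sqrt n ≤ (k : ℝ) := by
        calc c * Real.sqrt n ≤ (K : ℝ) := hKfloor
          _ ≤ (k : ℝ) := by exact_mod_cast hKk
      have hcount : (𝒜.filter (fun A => A.card = k)).card ≤ n.choose k := by
        have hsub : 𝒜.filter (fun A => A.card = k)
            ⊆ (Finset.univ : Finset (Fin n)).powersetCard k := by
          intro A hA
          simp only [Finset.mem_filter, h𝒜, Finset.mem_powerset] at hA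
          exact Finset.mem_powersetCard.2 ⟨hA.1.1, hA.2⟩
        calc (𝒜.filter (fun A => A.card = k)).card
            ≤ ((Finset.univ : Finset (Fin n)).powersetCard k).card :=
              Finset.card_le_card hsub
          _ = n.choose k := by rw [Finset.card_powersetCard, Finset.card_univ, Fintype.card_fin]
      have hfac : (0:ℝ) < k.factorial := by exact_mod_cast k.factorial_pos
      calc ∑ A ∈ 𝒜.filter (fun A => A.card = k), (n:ℝ)/(A.card.factorial:ℝ)
          = ∑ A ∈ 𝒜.filter (fun A => A.card = k), (n:ℝ)/(k.factorial:ℝ) := by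
            apply Finset.sum_congr rfl
            intro A hA
            rw [(Finset.mem_filter.1 hA).2]
        _ = ((𝒜.filter (fun A => A.card = k)).card : ℝ) * ((n:ℝ)/(k.factorial:ℝ)) := by
            rw [Finset.sum_const, nsmul_eq_mul]
        _ ≤ (n.choose k : ℝ) * ((n:ℝ)/(k.factorial:ℝ)) := by
            apply mul_le_mul_of_nonneg_right _ (by positivity)
            exact_mod_cast hcount
        _ ≤ (ρ^k * k.factorial) * ((n:ℝ)/(k.factorial:ℝ)) := by
            apply mul_le_mul_of_nonneg_right _ (by positivity)
            exact choose_le_rho_pow_mul_factorial hce n k hck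
        _ = (n : ℝ) * ρ^k := by field_simp
        _ ≤ (n : ℝ) * ρ^K := by
            apply mul_le_mul_of_nonneg_left _ (by positivity)
            exact pow_le_pow_of_le_one hρ0 hρ1.le hKk
    have himgcard : (img.card : ℝ) ≤ (n:ℝ) + 1 := by
      have hsub : img ⊆ Finset.range (n+1) := by
        intro k hk
        obtain ⟨A₀, _, hA₀k⟩ := Finset.mem_image.1 hk
        rw [Finset.mem_range]
        have : A₀.card ≤ n := by
          calc A₀.card ≤ (Finset.univ : Finset (Fin n)).card :=
            Finset.card_le_card (Finset.subset_univ A₀)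
            _ = n := by simp
        omega
      have := Finset.card_le_card hsub
      rw [Finset.card_range] at this
      exact_mod_cast this
    calc ∑ k ∈ img, ∑ A ∈ 𝒜.filter (fun A => A.card = k), (n:ℝ)/(A.card.factorial:ℝ)
        ≤ (img.card : ℝ) * ((n : ℝ) * ρ^K) := by
          have := Finset.sum_le_card_nsmul img _ ((n : ℝ) * ρ^K) hper
          rw [nsmul_eq_mul] at this
          exact this
      _ ≤ ((n:ℝ) + 1) * ((n : ℝ) * ρ^K) :=
          mul_le_mul_of_nonneg_right himgcard (by positivity)
  -- step 5 : the tail is at most 1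
  have htail : ((n:ℝ) + 1) * ((n : ℝ) * ρ^K) ≤ 1 := by
    set s := Nat.sqrt n with hs
    have hs_le : ((s:ℝ)) ≤ Real.sqrt n := by
      rw [Real.le_sqrt (by positivity) (by positivity)]
      exact_mod_cast Nat.sqrt_le' n
    have h3c : (3:ℝ) ≤ c := by rw [hc]; linarith
    have h3s : 3 * s ≤ K := by
      have hr : ((3 * s : ℕ) : ℝ) ≤ (K : ℝ) := by
        have hcst : ((3 * s : ℕ) : ℝ) = 3 * (s:ℝ) := by push_cast; ring
        rw [hcst]
        calc (3:ℝ) * s ≤ 3 * Real.sqrt n :=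
              mul_le_mul_of_nonneg_left hs_le (by norm_num)
          _ ≤ c * Real.sqrt n :=
              mul_le_mul_of_nonneg_right h3c (Real.sqrt_nonneg _)
          _ ≤ (K : ℝ) := hKfloor
      exact_mod_cast hr
    have hρK : ρ^K ≤ (ρ^3)^s := by
      rw [← pow_mul]
      exact pow_le_pow_of_le_one hρ0 hρ1.le h3s
    have hn_le : (n:ℝ) ≤ ((s:ℝ)+1)^2 := by
      have := (Nat.lt_succ_sqrt n).le
      have hcast : (n:ℝ) ≤ ((s+1 : ℕ):ℝ) * ((s+1 : ℕ):ℝ) := by exact_mod_cast this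
      push_cast at hcast
      nlinarith [hcast]
    have e1 : (n:ℝ) + 1 ≤ 2 * (n:ℝ) := by
      have : (1:ℝ) ≤ (n:ℝ) := by exact_mod_cast hn1
      linarith
    calc ((n:ℝ) + 1) * ((n : ℝ) * ρ^K)
        ≤ (2 * (n:ℝ)) * ((n : ℝ) * ρ^K) :=
          mul_le_mul_of_nonneg_right e1 (by positivity)
      _ = 2 * ((n:ℝ) * (n:ℝ)) * ρ^K := by ring
      _ ≤ 2 * ((((s:ℝ)+1)^2) * (((s:ℝ)+1)^2)) * (ρ^3)^s := by
          have m1 : (n:ℝ)*(n:ℝ) ≤ ((s:ℝ)+1)^2*((s:ℝ)+1)^2 :=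
            mul_le_mul hn_le hn_le (by positivity) (by positivity)
          have m2 : 2*((n:ℝ)*(n:ℝ)) ≤ 2*(((s:ℝ)+1)^2*((s:ℝ)+1)^2) := by linarith
          exact mul_le_mul m2 hρK (by positivity) (by positivity)
      _ = 2 * ((s:ℝ)+1)^4 * (ρ^3)^s := by ring
      _ ≤ 1 := (hs₁ s hsq).le
  -- final assembly
  have hk₀le : (k₀:ℝ) ≤ c * Real.sqrt n + 1 := (Nat.ceil_lt_add_one (by positivity)).le
  have h2δ : 2 ≤ δ * Real.sqrt n := by
    have := mul_le_mul_of_nonneg_left hsqn hδ.le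
    have hδne : δ ≠ 0 := ne_of_gt hδ
    calc (2:ℝ) = δ * (2/δ) := by field_simp
      _ ≤ δ * Real.sqrt n := this
  have hfinal : lam * Real.sqrt n = c * Real.sqrt n + δ * Real.sqrt n := by
    rw [hδdef]; ring
  calc ∑ T₁ ∈ RBn, ∑ T₂ ∈ RBn, p T₁ * p T₂ * (mast T₁ T₂ : ℝ)
      ≤ (k₀ : ℝ) + ∑ A ∈ 𝒜, (n : ℝ) * (∑ T₁ ∈ RBn, ∑ T₂ ∈ RBn, p T₁ * p T₂ *
          (if restrict A T₁ = restrict A T₂ then (1:ℝ) else 0)) := step1.trans (le_of_eq step2)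
    _ ≤ (k₀ : ℝ) + ((n:ℝ) + 1) * ((n : ℝ) * ρ^K) := by
        have := step3.trans step4
        linarith
    _ ≤ (c * Real.sqrt n + 1) + 1 := by linarith
    _ ≤ c * Real.sqrt n + δ * Real.sqrt n := by linarith
    _ = lam * Real.sqrt n := hfinal.symm
end

section
/- For every real number λ > e·√2 there exists a natural number m such that for all n ≥ m and every rooted binary leaf-labeled tree T on Fin n, the average over all permutations σ of Fin n satisfies (1/n!) · ∑_{σ ∈ Sym(Fin n)} MAST(T, σ·T) ≤ λ·√n. (That is, if T₁ and T₂ are generated from the uniform distribution on rooted binary trees with n leaves having the same tree shape — T₂ a uniformly random leaf relabeling of T₁ — then E[MAST(T₁,T₂)] ≤ λ·√n.) -/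
namespace RTree

variable {α β : Type}



def leafList : RTree α → List α
  | leaf a => [a]
  | node l r => leafList l ++ leafList r

lemma coe_leafList (t : RTree α) : (leafList t : Multiset α) = leafM t := by
  induction t with
  | leaf a => rfl
  | node l r ih1 ih2 => simp [leafM, leafList, ← ih1, ← ih2]

lemma leafList_relabel (f : α → β) (t : RTree α) :
    leafList (relabel f t) = (leafList t).map f := by
  induction t <;> simp [relabel, leafList, *]

lemma restrict_relabel_s7 [DecidableEq α] [DecidableEq β] (e : α ≃ β) (A : Finset β)
    (t : RTree α) :
    restrict A (relabel e t) = Option.map (relabel e) (restrict (A.image e.symm) t) := by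
  induction t with
  | leaf a =>
      by_cases h : e a ∈ A
      · have h' : a ∈ A.image e.symm := by
          exact Finset.mem_image.2 ⟨e a, h, by simp⟩
        simp [relabel, restrict, h, h']
      · have h' : a ∉ A.image e.symm := by
          simp only [Finset.mem_image]
          rintro ⟨x, hx, rfl⟩
          simp [hx] at h
        simp [relabel, restrict, h, h']
  | node l r ihl ihr =>
      cases hl : restrict (A.image e.symm) l <;> cases hr : restrict (A.image e.symm) r <;>
        simp [relabel, restrict, ihl, ihr, hl, hr]

lemma leafM_restrict [DecidableEq α] (A : Finset α) (t : RTree α) :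
    (restrict A t).elim 0 leafM = (leafM t).filter (· ∈ A) := by
  induction t with
  | leaf a =>
      by_cases h : a ∈ A <;> simp [restrict, leafM, h, Multiset.filter_singleton]
  | node l r ihl ihr =>
      cases hl : restrict A l <;> cases hr : restrict A r <;>
        simp [restrict, leafM, hl, hr, Multiset.filter_add] <;>
        · rw [← ihl, ← ihr]; simp [hl, hr, leafM]

lemma restrict_empty [DecidableEq α] (t : RTree α) : restrict (∅ : Finset α) t = none := by
  induction t with
  | leaf a => simp [restrict]
  | node l r ihl ihr => simp [restrict, ihl, ihr]

end RTree
namespace RTree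

lemma leafM_restrict_some [DecidableEq α] {A : Finset α} {t u : RTree α}
    (h : restrict A t = some u) : leafM u = (leafM t).filter (· ∈ A) := by
  have := leafM_restrict A t
  rwa [h] at this

def keyFun {n : ℕ} (T : RTree (Fin n)) (A B : Finset (Fin n)) (b : Fin n) : Fin n :=
  match restrict A T, restrict B T with
  | some u, some v => (leafList u).getD ((leafList v).idxOf b) b
  | _, _ => b

lemma key_lemma {n : ℕ} {T : RTree (Fin n)} (hT : IsRB T) (σ : Equiv.Perm (Fin n))
    {A : Finset (Fin n)} (h : restrict A T = restrict A (relabel (⇑σ) T)) :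
    ∀ b ∈ A.image ⇑σ.symm, σ b = keyFun T A (A.image ⇑σ.symm) b := by
  intro b hb
  set B := A.image ⇑σ.symm with hB
  rw [restrict_relabel_s7 σ A T] at h
  cases hv : restrict B T with
  | none =>
      exfalso
      have h0 := leafM_restrict B T
      rw [hv] at h0
      have : b ∈ (leafM T).filter (· ∈ B) := by
        rw [hT]
        simp [Multiset.mem_filter, hb]
      rw [← h0] at this
      simp at this
  | some v =>
      rw [hv] at h
      simp only [Option.map_some] at h
      have hb' : b ∈ leafList v := by
        have hm : leafM v = (leafM T).filter (· ∈ B) := leafM_restrict_some hv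
        have : b ∈ leafM v := by
          rw [hm, hT]; simp [Multiset.mem_filter, hb]
        rw [← coe_leafList] at this
        simpa using this
      have hlen : ((leafList v).idxOf b) < (leafList v).length :=
        List.idxOf_lt_length_iff.2 hb'
      have hkey : keyFun T A B b =
          (leafList (relabel (⇑σ) v)).getD ((leafList v).idxOf b) b := by
        simp only [keyFun, h, hv]
      rw [hkey, leafList_relabel]
      rw [List.getD_eq_getElem _ _ (by simpa using hlen)]
      simp only [List.getElem_map]
      rw [List.getElem_idxOf hlen]

end RTree
namespace RTree

open Finset

lemma card_stab_le {n : ℕ} (B : Finset (Fin n)) :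
    ((univ : Finset (Equiv.Perm (Fin n))).filter (fun τ => ∀ b ∈ B, τ b = b)).card
      ≤ (n - B.card).factorial := by
  classical
  have hcard : Fintype.card {x : Fin n // x ∉ B} = n - B.card := by
    have := Fintype.card_subtype_compl (fun x : Fin n => x ∈ B)
    simpa [Fintype.card_fin] using this
  -- map each τ to its restriction to the complement of B
  have key : ((univ : Finset (Equiv.Perm (Fin n))).filter (fun τ => ∀ b ∈ B, τ b = b)).card
      ≤ Fintype.card (Equiv.Perm {x : Fin n // x ∉ B}) := by
    rw [← Fintype.card_subtype]
    refine Fintype.card_le_of_injective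
      (fun τ : {τ : Equiv.Perm (Fin n) // ∀ b ∈ B, τ b = b} =>
        τ.1.subtypePerm (p := fun x => x ∉ B) (by
          intro x
          symm
          constructor
          · intro hx hmem
            have h1 : τ.1 (τ.1 x) = τ.1 x := τ.2 _ hmem
            have h2 : τ.1 x = x := τ.1.injective h1
            rw [h2] at hmem
            exact hx hmem
          · intro hx hmem
            refine hx ?_
            rw [τ.2 x hmem]
            exact hmem)) ?_
    intro τ τ' hee
    apply Subtype.ext
    apply Equiv.ext
    intro x
    by_cases hx : x ∈ B
    · rw [τ.2 x hx, τ'.2 x hx]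
    · have := congrArg (fun (e : Equiv.Perm {x : Fin n // x ∉ B}) => (e ⟨x, hx⟩ : Fin n)) hee
      simpa [Equiv.Perm.subtypePerm_apply] using this
  calc _ ≤ Fintype.card (Equiv.Perm {x : Fin n // x ∉ B}) := key
    _ = (n - B.card).factorial := by rw [Fintype.card_perm, hcard]

lemma card_fix_le {n : ℕ} (B : Finset (Fin n)) (g : Fin n → Fin n) :
    ((univ : Finset (Equiv.Perm (Fin n))).filter (fun σ => ∀ b ∈ B, σ b = g b)).card
      ≤ (n - B.card).factorial := by
  classical
  rcases ((univ : Finset (Equiv.Perm (Fin n))).filter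
      (fun σ => ∀ b ∈ B, σ b = g b)).eq_empty_or_nonempty with he | ⟨σ₀, hσ₀⟩
  · simp [he]
  · have hσ₀' : ∀ b ∈ B, σ₀ b = g b := (Finset.mem_filter.1 hσ₀).2
    refine le_trans ?_ (card_stab_le B)
    apply Finset.card_le_card_of_injOn (fun σ => σ₀⁻¹ * σ)
    · intro σ hσ
      have hσ' : ∀ b ∈ B, σ b = g b := (Finset.mem_filter.1 hσ).2
      simp only [Finset.coe_filter, Set.mem_setOf_eq, Finset.mem_filter, Finset.mem_univ, true_and]
      intro b hb
      simp [Equiv.Perm.mul_apply, hσ' b hb, ← hσ₀' b hb]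
    · intro σ _ σ' _ h
      exact mul_left_cancel h

end RTree
namespace RTree

open Finset

lemma exists_agreement {n : ℕ} (T₁ T₂ : RTree (Fin n)) :
    ∃ A ∈ ((univ : Finset (Fin n)).powerset.filter
      (fun A => restrict A T₁ = restrict A T₂)), A.card = mast T₁ T₂ := by
  have hne : ((univ : Finset (Fin n)).powerset.filter
      (fun A => restrict A T₁ = restrict A T₂)).Nonempty :=
    ⟨∅, by simp [restrict_empty]⟩
  obtain ⟨A, hA, h⟩ := Finset.exists_mem_eq_sup _ hne Finset.card
  exact ⟨A, hA, h.symm⟩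

lemma mast_le {n : ℕ} (T₁ T₂ : RTree (Fin n)) : mast T₁ T₂ ≤ n := by
  apply Finset.sup_le
  intro A hA
  simpa using Finset.card_le_univ A

lemma bad_card_le {n : ℕ} (k : ℕ) {T : RTree (Fin n)} (hT : IsRB T) :
    ((univ : Finset (Equiv.Perm (Fin n))).filter
        (fun σ : Equiv.Perm (Fin n) => k + 1 ≤ mast T (relabel (⇑σ) T))).card
      ≤ ∑ j ∈ Finset.Icc (k+1) n, n.choose j * n.choose j * (n - j).factorial := by
  classical
  have hsub : ((univ : Finset (Equiv.Perm (Fin n))).filter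
        (fun σ : Equiv.Perm (Fin n) => k + 1 ≤ mast T (relabel (⇑σ) T)))
      ⊆ (Finset.Icc (k+1) n).biUnion (fun j =>
          ((univ.powersetCard j) ×ˢ (univ.powersetCard j)).biUnion (fun p =>
            univ.filter (fun σ : Equiv.Perm (Fin n) =>
              ∀ b ∈ p.2, σ b = keyFun T p.1 p.2 b))) := by
    intro σ hσ
    have hk : k + 1 ≤ mast T (relabel (⇑σ) T) := (Finset.mem_filter.1 hσ).2
    obtain ⟨A, hA, hAcard⟩ := exists_agreement T (relabel (⇑σ) T)
    have hAagree : restrict A T = restrict A (relabel (⇑σ) T) := (Finset.mem_filter.1 hA).2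
    have hjIcc : A.card ∈ Finset.Icc (k+1) n := by
      rw [Finset.mem_Icc]
      exact ⟨hAcard ▸ hk, by simpa using Finset.card_le_univ A⟩
    apply Finset.mem_biUnion.2
    refine ⟨A.card, hjIcc, ?_⟩
    apply Finset.mem_biUnion.2
    refine ⟨(A, A.image ⇑σ.symm), ?_, ?_⟩
    · rw [Finset.mem_product]
      constructor
      · exact Finset.mem_powersetCard_univ.2 rfl
      · exact Finset.mem_powersetCard_univ.2
          (Finset.card_image_of_injective A σ.symm.injective)
    · rw [Finset.mem_filter]
      exact ⟨Finset.mem_univ σ, key_lemma hT σ hAagree⟩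
  calc _ ≤ _ := Finset.card_le_card hsub
    _ ≤ ∑ j ∈ Finset.Icc (k+1) n,
          (((univ.powersetCard j) ×ˢ (univ.powersetCard j)).biUnion (fun p =>
            univ.filter (fun σ : Equiv.Perm (Fin n) =>
              ∀ b ∈ p.2, σ b = keyFun T p.1 p.2 b))).card := Finset.card_biUnion_le
    _ ≤ ∑ j ∈ Finset.Icc (k+1) n, n.choose j * n.choose j * (n - j).factorial := by
        apply Finset.sum_le_sum
        intro j hj
        calc _ ≤ ∑ p ∈ (univ.powersetCard j ×ˢ univ.powersetCard j),
              (univ.filter (fun σ : Equiv.Perm (Fin n) =>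
                ∀ b ∈ p.2, σ b = keyFun T p.1 p.2 b)).card := Finset.card_biUnion_le
          _ ≤ ∑ p ∈ ((univ.powersetCard j : Finset (Finset (Fin n))) ×ˢ univ.powersetCard j),
                (n - j).factorial := by
              apply Finset.sum_le_sum
              intro p hp
              have h2 : p.2.card = j :=
                Finset.mem_powersetCard_univ.1 (Finset.mem_product.1 hp).2
              simpa [h2] using card_fix_le p.2 (keyFun T p.1 p.2)
          _ = n.choose j * n.choose j * (n - j).factorial := by
              rw [Finset.sum_const, Finset.card_product, Finset.card_powersetCard]
              simp [mul_assoc, Finset.card_univ]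

end RTree
namespace RTree

open Finset

lemma sum_mast_le {n k : ℕ} (T : RTree (Fin n)) :
    ∑ σ : Equiv.Perm (Fin n), mast T (relabel (⇑σ) T)
      ≤ n.factorial * k + n * ((univ : Finset (Equiv.Perm (Fin n))).filter
          (fun σ : Equiv.Perm (Fin n) => k + 1 ≤ mast T (relabel (⇑σ) T))).card := by
  classical
  calc ∑ σ : Equiv.Perm (Fin n), mast T (relabel (⇑σ) T)
      ≤ ∑ σ : Equiv.Perm (Fin n),
        (if k + 1 ≤ mast T (relabel (⇑σ) T) then n else k) := by
        apply Finset.sum_le_sum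
        intro σ _
        split
        · exact mast_le _ _
        · omega
    _ = (univ.filter (fun σ : Equiv.Perm (Fin n) =>
          k + 1 ≤ mast T (relabel (⇑σ) T))).card * n
        + (univ.filter (fun σ : Equiv.Perm (Fin n) =>
          ¬ (k + 1 ≤ mast T (relabel (⇑σ) T)))).card * k := by
        rw [Finset.sum_ite, Finset.sum_const, Finset.sum_const, smul_eq_mul, smul_eq_mul]
    _ ≤ n.factorial * k + n * ((univ : Finset (Equiv.Perm (Fin n))).filter
          (fun σ : Equiv.Perm (Fin n) => k + 1 ≤ mast T (relabel (⇑σ) T))).card := by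
        have h1 : (univ.filter (fun σ : Equiv.Perm (Fin n) =>
            ¬ (k + 1 ≤ mast T (relabel (⇑σ) T)))).card ≤ n.factorial := by
          calc _ ≤ (univ : Finset (Equiv.Perm (Fin n))).card := Finset.card_filter_le _ _
            _ = n.factorial := by rw [Finset.card_univ, Fintype.card_perm, Fintype.card_fin]
        nlinarith [h1]

lemma pow_le_factorial_mul_exp (j : ℕ) :
    (j:ℝ)^j ≤ (j.factorial:ℝ) * Real.exp 1 ^ j := by
  induction j with
  | zero => simp
  | succ j ih =>
    have he : (0:ℝ) < Real.exp 1 := Real.exp_pos 1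
    have hstep : ((j:ℝ)+1)^j ≤ Real.exp 1 * (j:ℝ)^j := by
      rcases Nat.eq_zero_or_pos j with rfl | hj
      · simpa using he.le
      · have hj' : (0:ℝ) < j := by exact_mod_cast hj
        have h1 : (1 + 1/(j:ℝ)) ≤ Real.exp (1/(j:ℝ)) := by
          have := Real.add_one_le_exp (1/(j:ℝ)); linarith
        have h2 : ((j:ℝ)+1)^j = (1+1/(j:ℝ))^j * (j:ℝ)^j := by
          rw [← mul_pow]; congr 1; field_simp
        have h3 : (1+1/(j:ℝ))^j ≤ Real.exp (1/(j:ℝ)) ^ j :=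
          pow_le_pow_left₀ (by positivity) h1 j
        have h4 : Real.exp (1/(j:ℝ)) ^ j = Real.exp 1 := by
          rw [← Real.exp_nat_mul]
          congr 1
          field_simp
        rw [h2]
        calc (1+1/(j:ℝ))^j * (j:ℝ)^j ≤ Real.exp 1 * (j:ℝ)^j := by
              apply mul_le_mul_of_nonneg_right _ (by positivity)
              rw [← h4]; exact h3
          _ = _ := rfl
    have hcast : ((j+1).factorial : ℝ) = ((j:ℝ)+1) * (j.factorial:ℝ) := by
      push_cast [Nat.factorial_succ]; ring
    calc ((j+1:ℕ) : ℝ)^(j+1) = ((j:ℝ)+1) * ((j:ℝ)+1)^j := by push_cast; ring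
      _ ≤ ((j:ℝ)+1) * (Real.exp 1 * (j:ℝ)^j) := by
          apply mul_le_mul_of_nonneg_left _ (by positivity)
          · push_cast at hstep ⊢; exact hstep
      _ ≤ ((j:ℝ)+1) * (Real.exp 1 * ((j.factorial:ℝ) * Real.exp 1 ^ j)) := by
          apply mul_le_mul_of_nonneg_left _ (by positivity)
          exact mul_le_mul_of_nonneg_left ih he.le
      _ = ((j+1).factorial:ℝ) * Real.exp 1 ^ (j+1) := by
          rw [hcast]; ring

lemma per_term {n j : ℕ} {c : ℝ} (hc : 0 < c) (hcn : c * Real.sqrt n ≤ (j:ℝ))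
    (hjn : j ≤ n) :
    ((n.choose j * n.choose j * (n - j).factorial : ℕ) : ℝ)
      ≤ ((Real.exp 1)^2/c^2)^j * (n.factorial:ℝ) := by
  set θ : ℝ := (Real.exp 1)^2/c^2 with hθdef
  have he : (0:ℝ) < Real.exp 1 := Real.exp_pos 1
  have hθ0 : 0 < θ := by positivity
  have hjfac : (0:ℝ) < (j.factorial:ℝ) := by exact_mod_cast j.factorial_pos
  -- n^j ≤ θ^j * (j!)^2
  have hc2n : c^2 * (n:ℝ) ≤ (j:ℝ)^2 := by
    have h0 : 0 ≤ c * Real.sqrt n := by positivity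
    have h1 := mul_self_le_mul_self h0 hcn
    have hs : Real.sqrt n * Real.sqrt n = (n:ℝ) :=
      Real.mul_self_sqrt (by positivity)
    nlinarith [h1, hs]
  have key : (n:ℝ)^j ≤ θ^j * (j.factorial:ℝ)^2 := by
    have h1 : (c^2 * (n:ℝ))^j ≤ ((j:ℝ)^2)^j := pow_le_pow_left₀ (by positivity) hc2n j
    have h2 : ((j:ℝ)^2)^j = ((j:ℝ)^j)^2 := by rw [← pow_mul, ← pow_mul, Nat.mul_comm]
    have h3 : ((j:ℝ)^j)^2 ≤ ((j.factorial:ℝ) * Real.exp 1 ^ j)^2 :=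
      pow_le_pow_left₀ (by positivity) (pow_le_factorial_mul_exp j) 2
    have h4 : (c^2 * (n:ℝ))^j ≤ (j.factorial:ℝ)^2 * ((Real.exp 1)^2)^j := by
      calc (c^2 * (n:ℝ))^j ≤ ((j:ℝ)^j)^2 := h1.trans_eq h2
        _ ≤ ((j.factorial:ℝ) * Real.exp 1 ^ j)^2 := h3
        _ = (j.factorial:ℝ)^2 * ((Real.exp 1)^2)^j := by
            rw [mul_pow, ← pow_mul, ← pow_mul, Nat.mul_comm]
    -- multiply both sides by θ^j
    have h5 : θ^j * (c^2 * (n:ℝ))^j ≤ θ^j * ((j.factorial:ℝ)^2 * ((Real.exp 1)^2)^j) :=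
      mul_le_mul_of_nonneg_left h4 (by positivity)
    have h6 : θ^j * (c^2 * (n:ℝ))^j = ((Real.exp 1)^2)^j * (n:ℝ)^j := by
      rw [← mul_pow, ← mul_pow]
      congr 1
      rw [hθdef, div_mul_eq_mul_div, div_eq_iff (by positivity)]
      ring
    have h7 : θ^j * ((j.factorial:ℝ)^2 * ((Real.exp 1)^2)^j)
        = ((Real.exp 1)^2)^j * (θ^j * (j.factorial:ℝ)^2) := by ring
    rw [h6, h7] at h5
    exact le_of_mul_le_mul_left h5 (by positivity)
  -- choose ≤ θ^j * j!
  have hdesc : ((n.choose j * j.factorial : ℕ):ℝ) ≤ (n:ℝ)^j := by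
    have h1 : n.choose j * j.factorial ≤ n ^ j := by
      have := Nat.descFactorial_le_pow n j
      rw [Nat.descFactorial_eq_factorial_mul_choose] at this
      exact le_trans (le_of_eq (Nat.mul_comm _ _)) this
    calc ((n.choose j * j.factorial : ℕ):ℝ) ≤ ((n^j : ℕ):ℝ) := by exact_mod_cast h1
      _ = (n:ℝ)^j := by push_cast; ring
  have hch : (n.choose j : ℝ) ≤ θ^j * (j.factorial:ℝ) := by
    have h1 : (n.choose j : ℝ) * (j.factorial:ℝ) ≤ (θ^j * (j.factorial:ℝ)) * (j.factorial:ℝ) := by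
      calc (n.choose j : ℝ) * (j.factorial:ℝ) = ((n.choose j * j.factorial : ℕ):ℝ) := by
            push_cast; ring
        _ ≤ (n:ℝ)^j := hdesc
        _ ≤ θ^j * (j.factorial:ℝ)^2 := key
        _ = (θ^j * (j.factorial:ℝ)) * (j.factorial:ℝ) := by ring
    exact le_of_mul_le_mul_right h1 hjfac
  -- conclude
  have hid : ((n.choose j * j.factorial * (n-j).factorial : ℕ):ℝ) = (n.factorial:ℝ) := by
    exact_mod_cast congrArg (Nat.cast : ℕ → ℝ) (Nat.choose_mul_factorial_mul_factorial hjn)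
  calc ((n.choose j * n.choose j * (n - j).factorial : ℕ) : ℝ)
      = (n.choose j : ℝ) * ((n.choose j : ℝ) * ((n-j).factorial:ℝ)) := by push_cast; ring
    _ ≤ (θ^j * (j.factorial:ℝ)) * ((n.choose j : ℝ) * ((n-j).factorial:ℝ)) := by
        apply mul_le_mul_of_nonneg_right hch (by positivity)
    _ = θ^j * ((n.choose j * j.factorial * (n-j).factorial : ℕ):ℝ) := by push_cast; ring
    _ = θ^j * (n.factorial:ℝ) := by rw [hid]

end RTree

open RTree Finset in
theorem average_mast_aux (lam : ℝ)
    (hlam : Real.exp 1 * Real.sqrt 2 < lam) :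
    ∃ m : ℕ, ∀ n : ℕ, m ≤ n → ∀ T : RTree (Fin n), RTree.IsRB T →
      (1 / (n.factorial : ℝ)) *
          ∑ σ : Equiv.Perm (Fin n), (RTree.mast T (RTree.relabel (⇑σ) T) : ℝ)
        ≤ lam * Real.sqrt n := by
  classical
  have he : (0:ℝ) < Real.exp 1 := Real.exp_pos 1
  have hs2 : (1:ℝ) < Real.sqrt 2 := by
    nlinarith [Real.sq_sqrt (by norm_num : (0:ℝ) ≤ 2), Real.sqrt_nonneg 2]
  set c : ℝ := (lam + Real.exp 1 * Real.sqrt 2)/2 with hcdef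
  have hec : Real.exp 1 < c := by nlinarith
  have hclam : c < lam := by nlinarith
  have hc0 : (0:ℝ) < c := lt_trans he hec
  set θ : ℝ := (Real.exp 1)^2/c^2 with hθdef
  have hθ0 : (0:ℝ) < θ := by positivity
  have hθ1 : θ < 1 := by
    rw [hθdef, div_lt_one (by positivity)]
    nlinarith
  have hlog : Real.log θ < 0 := Real.log_neg hθ0 hθ1
  set b : ℝ := c * (-Real.log θ) with hbdef
  have hb0 : (0:ℝ) < b := mul_pos hc0 (by linarith)
  set M : ℝ := max ((2/(lam - c))^2) (((5/b)^5)^2) with hMdef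
  refine ⟨max 1 ⌈M⌉₊, ?_⟩
  intro n hn T hT
  have hn1 : 1 ≤ n := le_trans (le_max_left _ _) hn
  have hnM : M ≤ (n:ℝ) := by
    have h1 : ⌈M⌉₊ ≤ n := le_trans (le_max_right _ _) hn
    calc M ≤ (⌈M⌉₊ : ℝ) := Nat.le_ceil M
      _ ≤ (n:ℝ) := by exact_mod_cast h1
  set s : ℝ := Real.sqrt n with hsdef
  have hs0 : (0:ℝ) ≤ s := Real.sqrt_nonneg n
  have hsn : s^2 = (n:ℝ) := Real.sq_sqrt (by positivity)
  have hsq1 : 2/(lam-c) ≤ s := by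
    rw [hsdef]
    rw [show (2/(lam-c)) = Real.sqrt ((2/(lam-c))^2) by
      rw [Real.sqrt_sq (le_of_lt (div_pos two_pos (by linarith)))]]
    apply Real.sqrt_le_sqrt
    calc (2/(lam-c))^2 ≤ M := le_max_left _ _
      _ ≤ (n:ℝ) := hnM
  have hsq2 : (5/b)^5 ≤ s := by
    rw [hsdef]
    rw [show ((5/b)^5 : ℝ) = Real.sqrt (((5/b)^5)^2) by
      rw [Real.sqrt_sq (pow_nonneg (div_nonneg (by norm_num) hb0.le) 5)]]
    apply Real.sqrt_le_sqrt
    calc ((5/b)^5)^2 ≤ M := le_max_right _ _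
      _ ≤ (n:ℝ) := hnM
  set k : ℕ := ⌈c * s⌉₊ with hkdef
  have hk1 : c * s ≤ (k:ℝ) := Nat.le_ceil _
  have hk2 : (k:ℝ) < c * s + 1 := Nat.ceil_lt_add_one (by positivity)
  have hfac0 : (0:ℝ) < (n.factorial : ℝ) := by exact_mod_cast n.factorial_pos
  set Bcard : ℝ := (((univ : Finset (Equiv.Perm (Fin n))).filter
      (fun σ : Equiv.Perm (Fin n) => k + 1 ≤ mast T (relabel (⇑σ) T))).card : ℝ) with hBdef
  have hsum : (∑ σ : Equiv.Perm (Fin n), (mast T (relabel (⇑σ) T) : ℝ))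
      ≤ (n.factorial : ℝ) * k + n * Bcard := by
    rw [hBdef]
    exact_mod_cast sum_mast_le (k := k) T
  have hbad : Bcard ≤ (n:ℝ) * (θ^(k+1) * (n.factorial:ℝ)) := by
    calc Bcard ≤ ((∑ j ∈ Finset.Icc (k+1) n,
          n.choose j * n.choose j * (n - j).factorial : ℕ) : ℝ) := by
          rw [hBdef]
          exact_mod_cast bad_card_le k hT
      _ = ∑ j ∈ Finset.Icc (k+1) n,
          ((n.choose j * n.choose j * (n - j).factorial : ℕ) : ℝ) := by push_cast; ring
      _ ≤ ∑ j ∈ Finset.Icc (k+1) n, θ^j * (n.factorial:ℝ) := by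
          apply Finset.sum_le_sum
          intro j hj
          have hjc := Finset.mem_Icc.1 hj
          apply per_term hc0 _ hjc.2
          calc c * Real.sqrt n = c * s := by rw [hsdef]
            _ ≤ (k:ℝ) := hk1
            _ ≤ (j:ℝ) := by exact_mod_cast le_trans (Nat.le_succ k) hjc.1
      _ ≤ ∑ j ∈ Finset.Icc (k+1) n, θ^(k+1) * (n.factorial:ℝ) := by
          apply Finset.sum_le_sum
          intro j hj
          have hjc := Finset.mem_Icc.1 hj
          exact mul_le_mul_of_nonneg_right
            (pow_le_pow_of_le_one hθ0.le hθ1.le hjc.1) hfac0.le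
      _ = ((Finset.Icc (k+1) n).card : ℝ) * (θ^(k+1) * (n.factorial:ℝ)) := by
          rw [Finset.sum_const, nsmul_eq_mul]
      _ ≤ (n:ℝ) * (θ^(k+1) * (n.factorial:ℝ)) := by
          apply mul_le_mul_of_nonneg_right _ (by positivity)
          have : (Finset.Icc (k+1) n).card ≤ n := by
            rw [Nat.card_Icc]; omega
          exact_mod_cast this
  have hE : (1 / (n.factorial : ℝ)) *
      (∑ σ : Equiv.Perm (Fin n), (mast T (relabel (⇑σ) T) : ℝ))
      ≤ (k:ℝ) + (n:ℝ)^2 * θ^(k+1) := by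
    rw [one_div, inv_mul_le_iff₀ hfac0]
    have hmul : (n:ℝ) * Bcard ≤ (n:ℝ) * ((n:ℝ) * (θ^(k+1) * (n.factorial:ℝ))) :=
      mul_le_mul_of_nonneg_left hbad (by positivity)
    calc (∑ σ : Equiv.Perm (Fin n), (mast T (relabel (⇑σ) T) : ℝ))
        ≤ (n.factorial : ℝ) * k + n * Bcard := hsum
      _ ≤ (n.factorial : ℝ) * k + (n:ℝ) * ((n:ℝ) * (θ^(k+1) * (n.factorial:ℝ))) := by
          linarith [hmul]
      _ = (n.factorial:ℝ) * ((k:ℝ) + (n:ℝ)^2 * θ^(k+1)) := by ring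
  -- bound θ^(k+1) via exponentials
  have hθexp : θ^(k+1) = Real.exp ((k+1 : ℕ) * Real.log θ) := by
    rw [Real.exp_nat_mul, Real.exp_log hθ0]
  have hmono : ((k+1:ℕ):ℝ) * Real.log θ ≤ (c * s) * Real.log θ := by
    apply mul_le_mul_of_nonpos_right _ hlog.le
    calc c * s ≤ (k:ℝ) := hk1
      _ ≤ ((k+1:ℕ):ℝ) := by push_cast; linarith
  have hθle : θ^(k+1) ≤ Real.exp (-(b * s)) := by
    rw [hθexp]
    apply Real.exp_le_exp.2
    calc ((k+1:ℕ):ℝ) * Real.log θ ≤ (c * s) * Real.log θ := hmono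
      _ = -(b * s) := by rw [hbdef]; ring
  have hexp2 : (n:ℝ)^2 ≤ Real.exp (b * s) := by
    have hx0 : (0:ℝ) ≤ b * s / 5 := div_nonneg (mul_nonneg hb0.le hs0) (by norm_num)
    have h1 : b * s / 5 ≤ Real.exp (b * s / 5) := by
      linarith [Real.add_one_le_exp (b * s / 5)]
    have h2 : (b * s / 5)^5 ≤ Real.exp (b * s / 5) ^ 5 := pow_le_pow_left₀ hx0 h1 5
    have h3 : Real.exp (b * s / 5) ^ 5 = Real.exp (b * s) := by
      rw [← Real.exp_nat_mul]
      congr 1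
      push_cast
      ring
    have hb5 : (0:ℝ) < (b/5)^5 := pow_pos (div_pos hb0 (by norm_num)) 5
    have hprod : (b/5)^5 * (5/b)^5 = 1 := by
      rw [← mul_pow]
      rw [show (b/5) * (5/b) = 1 by field_simp [hb0.ne']]
      norm_num
    have h4 : 1 ≤ (b/5)^5 * s := by
      calc (1:ℝ) = (b/5)^5 * (5/b)^5 := hprod.symm
        _ ≤ (b/5)^5 * s := mul_le_mul_of_nonneg_left hsq2 hb5.le
    have h5 : (n:ℝ)^2 ≤ (b * s / 5)^5 := by
      have : (b * s/5)^5 = ((b/5)^5 * s) * s^4 := by ring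
      rw [this]
      calc (n:ℝ)^2 = s^4 := by rw [← hsn]; ring
        _ = 1 * s^4 := by ring
        _ ≤ ((b/5)^5 * s) * s^4 := mul_le_mul_of_nonneg_right h4 (by positivity)
    calc (n:ℝ)^2 ≤ (b * s / 5)^5 := h5
      _ ≤ Real.exp (b * s / 5) ^ 5 := h2
      _ = Real.exp (b * s) := h3
  have hsmall : (n:ℝ)^2 * θ^(k+1) ≤ 1 := by
    have hebs : (0:ℝ) < Real.exp (b * s) := Real.exp_pos _
    calc (n:ℝ)^2 * θ^(k+1) ≤ (n:ℝ)^2 * Real.exp (-(b * s)) := by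
          apply mul_le_mul_of_nonneg_left hθle (by positivity)
      _ = (n:ℝ)^2 * (Real.exp (b * s))⁻¹ := by rw [Real.exp_neg]
      _ ≤ Real.exp (b * s) * (Real.exp (b * s))⁻¹ :=
          mul_le_mul_of_nonneg_right hexp2 (by positivity)
      _ = 1 := mul_inv_cancel₀ hebs.ne'
  have hfin : (k:ℝ) + (n:ℝ)^2 * θ^(k+1) ≤ lam * s := by
    have h2s : 2 ≤ (lam - c) * s := by
      rw [div_le_iff₀ (by linarith)] at hsq1
      linarith [hsq1]
    linarith [hk2, hsmall, h2s]
  calc (1 / (n.factorial : ℝ)) *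
      (∑ σ : Equiv.Perm (Fin n), (mast T (relabel (⇑σ) T) : ℝ))
      ≤ (k:ℝ) + (n:ℝ)^2 * θ^(k+1) := hE
    _ ≤ lam * s := hfin


/-- For every `λ > e·√2` there is an `m` such that for all `n ≥ m` and every rooted binary
leaf-labeled tree `T` on `Fin n`, the average of `MAST(T, σ·T)` over all permutations `σ`
of `Fin n` is at most `λ·√n`. -/
theorem average_mast_same_shape_upper_bound (lam : ℝ)
    (hlam : Real.exp 1 * Real.sqrt 2 < lam) :
    ∃ m : ℕ, ∀ n : ℕ, m ≤ n → ∀ T : RTree (Fin n), RTree.IsRB T →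
      (1 / (n.factorial : ℝ)) *
          ∑ σ : Equiv.Perm (Fin n), (RTree.mast T (RTree.relabel (⇑σ) T) : ℝ)
        ≤ lam * Real.sqrt n :=
  average_mast_aux lam hlam
end
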